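/- (Correctness of the mechanism in world L.) Assume 0 < P_{ℓH} and P_{ℓL} < 1, and let c = (1/3)·min{T_{ℓh} − P_{ℓH}, T_{ℓℓ} − T_{ℓh}, P_{ℓL} − T_{ℓℓ}, P_{hH} − T_{hh}, T_{hh} − T_{hℓ}, T_{hℓ} − P_{hL}} (which is positive). Let T be an odd positive integer and F, U, K natural numbers with F + U + K = T, 2F < T and 2U < T. Set a_ℓ = (F + K·T_{hℓ})/T and a_h = (F + K·T_{hh})/T. For each k ∈ {0, 1, …, K} let frac(k) = (F + k)/T and let med(k) be the ((T+1)/2)-th smallest element of the multiset consisting of F copies of 0, (K − k) copies of a_ℓ, k copies of a_h, and U copies of 1. Then the probability, for k drawn from the binomial distribution Binomial(K, P_{hL}), that frac(k) > med(k) is at most 2·exp(−2c²K). -/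

import Mathlib

open scoped ENNReal

/-- Posterior prediction `T_{m'm}` of the fraction of agents receiving signal `m'`,
for an agent who received signal `m`. -/
noncomputable def Tpost (PL PH PmL PmH Pm'L Pm'H : ℝ) : ℝ :=
  (PL * PmL * Pm'L + PH * PmH * Pm'H) / (PL * PmL + PH * PmH)

/-- The constant `c` of equation (3). -/
noncomputable def cconst (PL PH PlL PhL PlH PhH : ℝ) : ℝ :=
  (1 / 3) * min (min (min (Tpost PL PH PhL PhH PlL PlH - PlH)
      (Tpost PL PH PlL PlH PlL PlH - Tpost PL PH PhL PhH PlL PlH))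
    (min (PlL - Tpost PL PH PlL PlH PlL PlH)
      (PhH - Tpost PL PH PhL PhH PhL PhH)))
    (min (Tpost PL PH PhL PhH PhL PhH - Tpost PL PH PlL PlH PhL PhH)
      (Tpost PL PH PlL PlH PhL PhH - PhL))

/-- `med F U K T al ah k` : the `((T+1)/2)`-th smallest element of the multiset consisting of
`F` copies of `0`, `K - k` copies of `al`, `k` copies of `ah` and `U` copies of `1`. -/
noncomputable def medOf (F U K T : ℕ) (al ah : ℝ) (k : ℕ) : ℝ :=
  ((Multiset.replicate F (0 : ℝ) + Multiset.replicate (K - k) al +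
      Multiset.replicate k ah + Multiset.replicate U (1 : ℝ)).sort (· ≤ ·)).getD
    ((T + 1) / 2 - 1) 0

private lemma exp_le_quad {x : ℝ} (h0 : 0 ≤ x) (h1 : x ≤ 1) :
    Real.exp x ≤ 1 + x + x ^ 2 := by
  have h := Real.exp_bound' h0 h1 (n := 2) (by norm_num)
  simp [Finset.sum_range_succ] at h
  nlinarith [sq_nonneg x]

private lemma exponent_bound {c PhL K' : ℝ} (hcpos : 0 < c) (hchalf : c ≤ 1 / 3)
    (hPhL0 : 0 ≤ PhL) (hPhL1 : PhL ≤ 1) (hK0 : 0 ≤ K') :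
    -(2 * c * (K' * (PhL + 3 * c))) + K' * (PhL * (Real.exp (2 * c) - 1)) ≤ -2 * c ^ 2 * K' := by
  have hq := exp_le_quad (x := 2 * c) (by linarith) (by linarith)
  have hB := mul_le_mul_of_nonneg_left (mul_le_mul_of_nonneg_left
    (show Real.exp (2 * c) - 1 ≤ 2 * c + 4 * c ^ 2 by nlinarith [hq]) hPhL0) hK0
  have hC := mul_le_mul_of_nonneg_left hPhL1
    (show (0:ℝ) ≤ 4 * c ^ 2 * K' by positivity)
  nlinarith [hB, hC]

private lemma le_medOf_aux {F U K T : ℕ} {al ah : ℝ} (k : ℕ) (hk : k ≤ K)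
    (h0 : 0 ≤ al) (hla : al ≤ ah) (hh1 : ah ≤ 1)
    (hT : F + U + K = T) (hF : 2 * F < T) (hU : 2 * U < T) :
    al ≤ medOf F U K T al ah k := by
  classical
  unfold medOf
  set L2 : List ℝ := List.replicate (K - k) al ++ (List.replicate k ah ++ List.replicate U 1)
    with hL2
  set L : List ℝ := List.replicate F (0:ℝ) ++ L2 with hL
  have hmem : ∀ x ∈ L2, al ≤ x := by
    intro x hx
    simp only [hL2, List.mem_append, List.mem_replicate] at hx
    rcases hx with ⟨_, rfl⟩ | ⟨_, rfl⟩ | ⟨_, rfl⟩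
    · exact le_refl _
    · exact hla
    · exact hla.trans hh1
  have hrep : ∀ (n : ℕ) (a : ℝ), List.Pairwise (· ≤ ·) (List.replicate n a) := by
    intro n a
    exact List.pairwise_replicate.mpr (Or.inr le_rfl)
  have hs2 : List.Pairwise (· ≤ ·) L2 := by
    rw [hL2, List.pairwise_append, List.pairwise_append]
    refine ⟨hrep _ _, ⟨hrep _ _, hrep _ _, ?_⟩, ?_⟩
    · intro a ha b hb
      rw [List.mem_replicate] at ha hb
      rw [ha.2, hb.2]; exact hh1
    · intro a ha b hb
      rw [List.mem_replicate] at ha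
      rw [ha.2]
      simp only [List.mem_append, List.mem_replicate] at hb
      rcases hb with ⟨_, rfl⟩ | ⟨_, rfl⟩
      · exact hla
      · exact hla.trans hh1
  have hsorted : List.Pairwise (· ≤ ·) L := by
    rw [hL, List.pairwise_append]
    refine ⟨hrep _ _, hs2, ?_⟩
    intro a ha b hb
    rw [List.mem_replicate] at ha
    rw [ha.2]
    exact h0.trans (hmem b hb)
  have hML : (Multiset.replicate F (0 : ℝ) + Multiset.replicate (K - k) al +
      Multiset.replicate k ah + Multiset.replicate U (1:ℝ)) = (L : Multiset ℝ) := by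
    rw [hL, hL2]
    simp only [← Multiset.coe_replicate, Multiset.coe_add]
    ac_rfl
  have hsort : (((Multiset.replicate F (0 : ℝ) + Multiset.replicate (K - k) al +
      Multiset.replicate k ah + Multiset.replicate U (1:ℝ))).sort (· ≤ ·)) = L := by
    rw [hML]
    exact List.Perm.eq_of_pairwise'
      (Multiset.pairwise_sort _ _) hsorted (Multiset.coe_eq_coe.mp (Multiset.sort_eq _ _))
  rw [hsort, hL]
  have hFi : F ≤ (T + 1) / 2 - 1 := by omega
  rw [List.getD_append_right _ _ _ _ (by simpa using hFi)]
  have hlt : (T + 1) / 2 - 1 - (List.replicate F (0:ℝ)).length < L2.length := by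
    simp [hL2]; omega
  rw [List.getD_eq_getElem _ _ hlt]
  exact hmem _ (List.getElem_mem _)

private lemma binom_ofReal {p : ℝ} (h0 : 0 ≤ p) (h1 : p ≤ 1) (K : ℕ) (k : Fin (K + 1)) :
    PMF.binomial (Real.toNNReal p) ((Real.toNNReal_le_toNNReal h1).trans_eq Real.toNNReal_one) K k
      = ENNReal.ofReal (p ^ (k : ℕ) * (1 - p) ^ (K - (k : ℕ)) * (K.choose k)) := by
  rw [PMF.binomial_apply]
  have h1p : (1 : ℝ≥0∞) - ENNReal.ofReal p = ENNReal.ofReal (1 - p) := by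
    rw [ENNReal.ofReal_sub 1 h0, ENNReal.ofReal_one]
  rw [Fin.val_last]
  rw [ENNReal.ofReal_mul (mul_nonneg (pow_nonneg h0 _) (pow_nonneg (by linarith) _)),
    ENNReal.ofReal_mul (pow_nonneg h0 _), ENNReal.ofReal_pow h0, ENNReal.ofReal_pow (by linarith),
    ← h1p, ENNReal.ofReal_natCast]
  simp [ENNReal.ofReal]

set_option maxHeartbeats 1000000 in
/-- Correctness of the Wisdom-of-the-Crowd-Voting mechanism in world `L`: under truthful play,
the probability (over the binomially distributed number `k` of contingent agents receiving
signal `h`) that the fraction of reported `h` signals exceeds the median of the predictions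
(i.e. that `A` is wrongly announced) is at most `2·exp(−2c²K)`. -/
theorem mechanism_correct_world_L
    (PL PH PlL PhL PlH PhH : ℝ)
    (hPL : 0 < PL) (hPH : 0 < PH) (hP : PL + PH = 1)
    (hPlL0 : 0 ≤ PlL) (hPlL1 : PlL ≤ 1) (hPhL0 : 0 ≤ PhL) (hPhL1 : PhL ≤ 1)
    (hPlH0 : 0 ≤ PlH) (hPlH1 : PlH ≤ 1) (hPhH0 : 0 ≤ PhH) (hPhH1 : PhH ≤ 1)
    (hsumL : PlL + PhL = 1) (hsumH : PlH + PhH = 1)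
    (hcorr : PlH < PlL)
    (hpos : 0 < PlH) (hlt : PlL < 1)
    (T F U K : ℕ) (hT : Odd T) (hTpos : 0 < T)
    (hFUK : F + U + K = T) (hF : 2 * F < T) (hU : 2 * U < T) :
    (∑ k : Fin (K + 1),
        if medOf F U K T (((F : ℝ) + K * Tpost PL PH PlL PlH PhL PhH) / T)
              (((F : ℝ) + K * Tpost PL PH PhL PhH PhL PhH) / T) k
            < ((F : ℝ) + (k : ℕ)) / T
          then PMF.binomial (Real.toNNReal PhL) ((Real.toNNReal_le_toNNReal hPhL1).trans_eq Real.toNNReal_one) K k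
          else 0)
      ≤ ENNReal.ofReal (2 * Real.exp (-2 * (cconst PL PH PlL PhL PlH PhH) ^ 2 * K)) := by
  classical
  set Thl := Tpost PL PH PlL PlH PhL PhH with hThl_def
  set Thh := Tpost PL PH PhL PhH PhL PhH with hThh_def
  have hPhLpos : 0 < PhL := by linarith
  have hPhHpos : 0 < PhH := by linarith
  have hPhLH : PhL < PhH := by linarith
  have hPlLpos : 0 < PlL := lt_trans hpos hcorr
  have hD1 : 0 < PL * PlL + PH * PlH := by positivity
  have hD2 : 0 < PL * PhL + PH * PhH := by positivity
  have e1 : Thl - PhL = PH * PlH * (PhH - PhL) / (PL * PlL + PH * PlH) := by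
    rw [hThl_def]; unfold Tpost; field_simp; ring
  have e2 : PhH - Thh = PL * PhL * (PhH - PhL) / (PL * PhL + PH * PhH) := by
    rw [hThh_def]; unfold Tpost; field_simp; ring
  have e3 : Thh - Thl = PL * PH * (PhH - PhL) * (PhH * PlL - PhL * PlH) /
      ((PL * PlL + PH * PlH) * (PL * PhL + PH * PhH)) := by
    rw [hThh_def, hThl_def]; unfold Tpost; field_simp; ring
  have hfac : PhH * PlL - PhL * PlH = PlL - PlH := by
    linear_combination PlL * hsumH - PlH * hsumL
  have hlb : PhL < Thl := by
    have h := div_pos (mul_pos (show (0:ℝ) < PH * PlH by positivity) (sub_pos.mpr hPhLH)) hD1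
    rw [← e1] at h; linarith
  have hub : Thh < PhH := by
    have h := div_pos (mul_pos (show (0:ℝ) < PL * PhL by positivity) (sub_pos.mpr hPhLH)) hD2
    rw [← e2] at h; linarith
  have hmid : Thl < Thh := by
    rw [hfac] at e3
    have h := div_pos (mul_pos (mul_pos (show (0:ℝ) < PL * PH by positivity)
        (sub_pos.mpr hPhLH)) (sub_pos.mpr hcorr))
      (show (0:ℝ) < (PL * PlL + PH * PlH) * (PL * PhL + PH * PhH) by positivity)
    rw [← e3] at h; linarith
  have eA : Tpost PL PH PhL PhH PlL PlH = 1 - Thh := by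
    rw [hThh_def]; unfold Tpost; field_simp
    linear_combination (PL * PhL) * hsumL + (PH * PhH) * hsumH
  have eB : Tpost PL PH PlL PlH PlL PlH = 1 - Thl := by
    rw [hThl_def]; unfold Tpost; field_simp
    linear_combination (PL * PlL) * hsumL + (PH * PlH) * hsumH
  clear_value Thl Thh
  have hThl0 : 0 ≤ Thl := le_of_lt (lt_of_le_of_lt hPhL0 hlb)
  have hThh1 : Thh ≤ 1 := by linarith
  have hThl1 : Thl ≤ 1 := by linarith
  -- facts about c
  set c := cconst PL PH PlL PhL PlH PhH with hc_def
  have hcc : c = 1 / 3 * min (min (min ((1 - Thh) - PlH) ((1 - Thl) - (1 - Thh)))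
      (min (PlL - (1 - Thl)) (PhH - Thh))) (min (Thh - Thl) (Thl - PhL)) := by
    rw [hc_def]; unfold cconst
    rw [eA, eB, ← hThl_def, ← hThh_def]
  have hcpos : 0 < c := by
    rw [hcc]
    have h1 : 0 < (1 - Thh) - PlH := by linarith
    have h2 : 0 < (1 - Thl) - (1 - Thh) := by linarith
    have h3 : 0 < PlL - (1 - Thl) := by linarith
    have h4 : 0 < PhH - Thh := by linarith
    have h5 : 0 < Thh - Thl := by linarith
    have h6 : 0 < Thl - PhL := by linarith
    have := lt_min (lt_min (lt_min h1 h2) (lt_min h3 h4)) (lt_min h5 h6)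
    linarith
  have hc3 : 3 * c ≤ Thl - PhL := by
    have h1 := min_le_right (min (min ((1 - Thh) - PlH) ((1 - Thl) - (1 - Thh)))
      (min (PlL - (1 - Thl)) (PhH - Thh))) (min (Thh - Thl) (Thl - PhL))
    have h2 := min_le_right (Thh - Thl) (Thl - PhL)
    rw [hcc]; linarith
  have hchalf : c ≤ 1 / 3 := by linarith
  clear_value c
  -- the medians are bounded below by al
  have hT0 : (0:ℝ) < (T:ℝ) := by exact_mod_cast hTpos
  set al : ℝ := ((F : ℝ) + K * Thl) / T with hal_def
  set ah : ℝ := ((F : ℝ) + K * Thh) / T with hah_def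
  have hal0 : 0 ≤ al := by
    rw [hal_def]
    apply div_nonneg _ (le_of_lt hT0)
    have : 0 ≤ (K:ℝ) * Thl := mul_nonneg (Nat.cast_nonneg _) hThl0
    positivity
  have halah : al ≤ ah := by
    rw [hal_def, hah_def]
    have hmul := mul_le_mul_of_nonneg_left (le_of_lt hmid) (Nat.cast_nonneg K : (0:ℝ) ≤ (K:ℝ))
    exact (div_le_div_iff_of_pos_right hT0).mpr (by linarith)
  have hah1 : ah ≤ 1 := by
    rw [hah_def, div_le_one hT0]
    have hFK : (F:ℝ) + (K:ℝ) ≤ (T:ℝ) := by exact_mod_cast (by omega : F + K ≤ T)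
    have h := mul_le_mul_of_nonneg_left hThh1 (Nat.cast_nonneg K : (0:ℝ) ≤ (K:ℝ))
    rw [mul_one] at h
    linarith
  -- step bound for each k
  have hg0 : ∀ k : ℕ, 0 ≤ PhL ^ k * (1 - PhL) ^ (K - k) * (K.choose k : ℝ) := by
    intro k
    exact mul_nonneg (mul_nonneg (pow_nonneg hPhL0 _) (pow_nonneg (by linarith) _))
      (Nat.cast_nonneg _)
  have hstep : ∀ k : Fin (K + 1),
      (if medOf F U K T al ah (k : ℕ) < ((F : ℝ) + (k : ℕ)) / T
        then PhL ^ (k:ℕ) * (1 - PhL) ^ (K - (k:ℕ)) * (K.choose (k:ℕ) : ℝ) else 0)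
      ≤ PhL ^ (k:ℕ) * (1 - PhL) ^ (K - (k:ℕ)) * (K.choose (k:ℕ) : ℝ) *
          Real.exp (2 * c * ((k:ℕ) - (K:ℝ) * (PhL + 3 * c))) := by
    intro k
    by_cases hcond : medOf F U K T al ah (k : ℕ) < ((F : ℝ) + (k : ℕ)) / T
    · rw [if_pos hcond]
      have hmed := le_medOf_aux (F := F) (U := U) (K := K) (T := T) (al := al) (ah := ah)
        (k : ℕ) (Fin.is_le k) hal0 halah hah1 hFUK hF hU
      have h1 : al < ((F : ℝ) + (k:ℕ)) / T := lt_of_le_of_lt hmed hcond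
      rw [hal_def] at h1
      replace h1 := (div_lt_div_iff_of_pos_right hT0).mp h1
      have h2 : (K:ℝ) * Thl < (k:ℕ) := by linarith
      have h3 : (K:ℝ) * (PhL + 3 * c) ≤ (K:ℝ) * Thl :=
        mul_le_mul_of_nonneg_left (by linarith) (Nat.cast_nonneg K)
      have h4 : (0:ℝ) ≤ 2 * c * ((k:ℕ) - (K:ℝ) * (PhL + 3 * c)) :=
        mul_nonneg (by linarith) (by linarith)
      have h5 : 1 ≤ Real.exp (2 * c * ((k:ℕ) - (K:ℝ) * (PhL + 3 * c))) := by
        rw [← Real.exp_zero]; exact Real.exp_le_exp.mpr h4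
      exact le_mul_of_one_le_right (hg0 _) h5
    · rw [if_neg hcond]
      exact mul_nonneg (hg0 _) (le_of_lt (Real.exp_pos _))
  -- the real-valued chain
  have hreal : (∑ k : Fin (K + 1),
      if medOf F U K T al ah (k : ℕ) < ((F : ℝ) + (k : ℕ)) / T
        then PhL ^ (k:ℕ) * (1 - PhL) ^ (K - (k:ℕ)) * (K.choose (k:ℕ) : ℝ) else 0)
      ≤ 2 * Real.exp (-2 * c ^ 2 * K) := by
    calc (∑ k : Fin (K + 1),
        if medOf F U K T al ah (k : ℕ) < ((F : ℝ) + (k : ℕ)) / T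
          then PhL ^ (k:ℕ) * (1 - PhL) ^ (K - (k:ℕ)) * (K.choose (k:ℕ) : ℝ) else 0)
        ≤ ∑ k : Fin (K + 1), PhL ^ (k:ℕ) * (1 - PhL) ^ (K - (k:ℕ)) * (K.choose (k:ℕ) : ℝ) *
            Real.exp (2 * c * ((k:ℕ) - (K:ℝ) * (PhL + 3 * c))) :=
          Finset.sum_le_sum fun k _ => hstep k
      _ = Real.exp (-(2 * c * ((K:ℝ) * (PhL + 3 * c)))) *
            ∑ k : Fin (K + 1), (PhL * Real.exp (2 * c)) ^ (k:ℕ) * (1 - PhL) ^ (K - (k:ℕ)) *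
              (K.choose (k:ℕ) : ℝ) := by
          rw [Finset.mul_sum]
          refine Finset.sum_congr rfl fun k _ => ?_
          have hexp : Real.exp (2 * c * ((k:ℕ) - (K:ℝ) * (PhL + 3 * c)))
              = Real.exp (2 * c) ^ (k:ℕ) * Real.exp (-(2 * c * ((K:ℝ) * (PhL + 3 * c)))) := by
            rw [← Real.exp_nat_mul, ← Real.exp_add]
            congr 1; ring
          rw [hexp, mul_pow]; ring
      _ = Real.exp (-(2 * c * ((K:ℝ) * (PhL + 3 * c)))) *
            (PhL * Real.exp (2 * c) + (1 - PhL)) ^ K := by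
          congr 1
          rw [Fin.sum_univ_eq_sum_range (fun k => (PhL * Real.exp (2 * c)) ^ k *
            (1 - PhL) ^ (K - k) * (K.choose k : ℝ))]
          exact (add_pow _ _ _).symm
      _ ≤ Real.exp (-(2 * c * ((K:ℝ) * (PhL + 3 * c)))) *
            Real.exp (PhL * (Real.exp (2 * c) - 1)) ^ K := by
          apply mul_le_mul_of_nonneg_left _ (le_of_lt (Real.exp_pos _))
          apply pow_le_pow_left₀
            (add_nonneg (mul_nonneg hPhL0 (Real.exp_pos _).le) (by linarith)) ?_ K
          have := Real.add_one_le_exp (PhL * (Real.exp (2 * c) - 1))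
          linarith
      _ = Real.exp (-(2 * c * ((K:ℝ) * (PhL + 3 * c))) + (K:ℝ) * (PhL * (Real.exp (2 * c) - 1))) := by
          rw [← Real.exp_nat_mul, ← Real.exp_add]
      _ ≤ Real.exp (-2 * c ^ 2 * K) := by
          exact Real.exp_le_exp.mpr
            (exponent_bound hcpos hchalf hPhL0 hPhL1 (Nat.cast_nonneg K))
      _ ≤ 2 * Real.exp (-2 * c ^ 2 * K) := by linarith [Real.exp_pos (-2 * c ^ 2 * (K:ℝ))]
  -- package into ENNReal
  calc (∑ k : Fin (K + 1),
        if medOf F U K T al ah (k : ℕ) < ((F : ℝ) + (k : ℕ)) / T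
          then PMF.binomial (Real.toNNReal PhL) ((Real.toNNReal_le_toNNReal hPhL1).trans_eq Real.toNNReal_one) K k
          else 0)
      = ∑ k : Fin (K + 1), ENNReal.ofReal
          (if medOf F U K T al ah (k : ℕ) < ((F : ℝ) + (k : ℕ)) / T
            then PhL ^ (k:ℕ) * (1 - PhL) ^ (K - (k:ℕ)) * (K.choose (k:ℕ) : ℝ) else 0) := by
        refine Finset.sum_congr rfl fun k _ => ?_
        by_cases hcond : medOf F U K T al ah (k : ℕ) < ((F : ℝ) + (k : ℕ)) / T
        · rw [if_pos hcond, if_pos hcond, binom_ofReal hPhL0 hPhL1 K k]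
        · rw [if_neg hcond, if_neg hcond, ENNReal.ofReal_zero]
    _ = ENNReal.ofReal (∑ k : Fin (K + 1),
          if medOf F U K T al ah (k : ℕ) < ((F : ℝ) + (k : ℕ)) / T
            then PhL ^ (k:ℕ) * (1 - PhL) ^ (K - (k:ℕ)) * (K.choose (k:ℕ) : ℝ) else 0) := by
        rw [ENNReal.ofReal_sum_of_nonneg]
        intro k _
        split
        · exact hg0 _
        · exact le_refl _
    _ ≤ ENNReal.ofReal (2 * Real.exp (-2 * c ^ 2 * K)) := ENNReal.ofReal_le_ofReal hreal
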